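/- For every x ∈ m, the kernel of the skew-symmetric bilinear form B_x^0(y1,y2) = ⟨x,[y1,y2]⟩ on m(x) equals the projection (g^x)_m of the centralizer g^x onto m along k; that is, {y ∈ m(x) : ⟨x,[y,y']⟩ = 0 for all y' ∈ m(x)} = (g^x)_m, and in particular (g^x)_m ⊆ m(x). -/

import Mathlib

open Module

theorem stmt2 {g : Type*} [LieRing g] [LieAlgebra ℝ g] [FiniteDimensional ℝ g]
    -- an ad-invariant inner product on g
    (B : g →ₗ[ℝ] g →ₗ[ℝ] ℝ)
    (hsymm : ∀ x y : g, B x y = B y x)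
    (hpos : ∀ x : g, x ≠ 0 → 0 < B x x)
    (hinv : ∀ x y z : g, B ⁅z, x⁆ y + B x ⁅z, y⁆ = 0)
    -- a Lie subalgebra k and its orthogonal complement m
    (k : LieSubalgebra ℝ g)
    (m : Submodule ℝ g)
    (hm : ∀ y : g, y ∈ m ↔ ∀ z ∈ k, B z y = 0)
    (hkm : ∀ z ∈ k, ∀ y ∈ m, ⁅z, y⁆ ∈ m)
    -- the projection of g onto m along k
    (π : g →ₗ[ℝ] g)
    (hπm : ∀ x : g, π x ∈ m)
    (hπk : ∀ x : g, x - π x ∈ k) :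
    ∀ x ∈ m,
      ({y : g | y ∈ m ∧ ⁅x, y⁆ ∈ m ∧
          ∀ y' : g, y' ∈ m → ⁅x, y'⁆ ∈ m → B x ⁅y, y'⁆ = 0}
        = π '' {z : g | ⁅x, z⁆ = 0})
      ∧ (π '' {z : g | ⁅x, z⁆ = 0} ⊆ {y : g | y ∈ m ∧ ⁅x, y⁆ ∈ m}) := by
  intro x hx
  -- basic consequences of positive definiteness
  have hzero : ∀ u : g, B u u = 0 → u = 0 := by
    intro u h
    by_contra hu
    exact (hpos u hu).ne' h
  have hkm0 : ∀ u : g, u ∈ k → u ∈ m → u = 0 := by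
    intro u hk hm'
    exact hzero u ((hm u).mp hm' u hk)
  have hπfix : ∀ y ∈ m, π y = y := by
    intro y hy
    have h1 : y - π y ∈ m := Submodule.sub_mem m hy (hπm y)
    have := hkm0 _ (hπk y) h1
    linear_combination (norm := module) -this
  have hπk0 : ∀ u ∈ k, π u = 0 := by
    intro u hu
    have h1 : π u ∈ k := by
      have : π u = u - (u - π u) := by abel
      rw [this]
      exact k.toSubmodule.sub_mem hu (hπk u)
    exact hkm0 _ h1 (hπm u)
  -- key: the image π(g^x) lands in the kernel of B_x^0 on m(x)
  have keyA : ∀ z : g, ⁅x, z⁆ = 0 → π z ∈ m ∧ ⁅x, π z⁆ ∈ m ∧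
      ∀ y' : g, y' ∈ m → ⁅x, y'⁆ ∈ m → B x ⁅π z, y'⁆ = 0 := by
    intro z hz
    set u := z - π z with hu
    have huk : u ∈ k := hπk z
    refine ⟨hπm z, ?_, ?_⟩
    · have h1 : ⁅x, π z⁆ = ⁅u, x⁆ := by
        have h0 : π z = z - u := by rw [hu]; abel
        rw [h0, lie_sub, hz, zero_sub]
        exact lie_skew u x
      rw [h1]
      exact hkm u huk x hx
    · intro y' hy' _
      have h1 : B x ⁅z, y'⁆ = 0 := by
        have := hinv x y' z
        have h2 : ⁅z, x⁆ = 0 := by rw [← lie_skew, hz, neg_zero]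
        rw [h2] at this
        simpa using this
      have h2 : B x ⁅u, y'⁆ = 0 := by
        have h3 : B u ⁅y', x⁆ = 0 := by
          refine (hm _).mp ?_ u huk
          have : ⁅y', x⁆ = -⁅x, y'⁆ := by rw [← lie_skew]
          rw [this]
          exact Submodule.neg_mem m ‹⁅x, y'⁆ ∈ m›
        have h4 := hinv u x y'
        have h5 : B ⁅y', u⁆ x = 0 := by linarith
        have h6 : ⁅u, y'⁆ = -⁅y', u⁆ := by rw [← lie_skew]
        rw [h6, map_neg, hsymm, h5, neg_zero]
      have h7 : ⁅π z, y'⁆ = ⁅z, y'⁆ - ⁅u, y'⁆ := by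
        rw [hu, sub_lie, sub_sub_cancel]
      rw [h7, map_sub, h1, h2, sub_zero]
  have hrefl : B.IsRefl := fun a b h => by rw [hsymm]; exact h
  constructor
  · ext y
    simp only [Set.mem_setOf_eq, Set.mem_image]
    constructor
    · rintro ⟨hym, hxym, hker⟩
      -- W = [x, k]
      set f : g →ₗ[ℝ] g := LieAlgebra.ad ℝ g x with hf
      set W : Submodule ℝ g := Submodule.map f k.toSubmodule with hW
      have hWm : W ≤ m := by
        rintro w ⟨u, hu, rfl⟩
        have h0 : f u = -⁅u, x⁆ := by
          rw [hf, LieAlgebra.ad_apply]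
          exact (lie_skew x u).symm
        rw [h0]
        exact Submodule.neg_mem m (hkm u hu x hx)
      have hnd : (LinearMap.BilinForm.restrict B W).Nondegenerate := by
        refine (LinearMap.IsRefl.nondegenerate_iff_separatingLeft (hrefl.domRestrict W)).mpr ?_
        rintro ⟨w, hw⟩ h
        have := h ⟨w, hw⟩
        simp only [LinearMap.BilinForm.restrict_apply, LinearMap.domRestrict_apply, LinearMap.domRestrict₁₂_apply] at this
        exact Subtype.ext (hzero w (by rw [hsymm] at this; exact this))
      have hcompl := LinearMap.BilinForm.isCompl_orthogonal_of_restrict_nondegenerate hrefl hnd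
      have hmem : ⁅x, y⁆ ∈ W ⊔ LinearMap.BilinForm.orthogonal B W := by
        rw [hcompl.sup_eq_top]; trivial
      obtain ⟨w₁, hw₁, w₂, hw₂, hsum⟩ := Submodule.mem_sup.mp hmem
      -- w₂ ∈ m and ⁅x, w₂⁆ ∈ m
      have hw₂m : w₂ ∈ m := by
        have : w₂ = ⁅x, y⁆ - w₁ := by rw [← hsum]; abel
        rw [this]
        exact Submodule.sub_mem m hxym (hWm hw₁)
      have hxw₂ : ⁅x, w₂⁆ ∈ m := by
        refine (hm _).mpr ?_
        intro u hu
        have h1 := hinv u w₂ x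
        have h2 : B ⁅x, u⁆ w₂ = 0 := hw₂ ⁅x, u⁆ ⟨u, hu, rfl⟩
        linarith
      -- B ⁅x,y⁆ w₂ = 0 from the kernel hypothesis
      have hBxy : B ⁅x, y⁆ w₂ = 0 := by
        have h1 : B x ⁅y, w₂⁆ = 0 := hker w₂ hw₂m hxw₂
        have h2 := hinv x w₂ y
        have h3 : ⁅x, y⁆ = -⁅y, x⁆ := by rw [← lie_skew]
        rw [h3, map_neg]
        simp only [LinearMap.neg_apply]
        linarith
      have hw₁w₂ : B w₁ w₂ = 0 := hw₂ w₁ hw₁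
      have hw₂0 : w₂ = 0 := by
        apply hzero
        have : B w₂ w₂ = B ⁅x, y⁆ w₂ - B w₁ w₂ := by
          rw [← hsum]; simp [map_add]
        rw [this, hBxy, hw₁w₂, sub_zero]
      have hxyW : ⁅x, y⁆ ∈ W := by
        rw [← hsum, hw₂0, add_zero]; exact hw₁
      obtain ⟨u, hu, huxy⟩ := hxyW
      refine ⟨y - u, ?_, ?_⟩
      · show ⁅x, y - u⁆ = 0
        rw [lie_sub]
        have : f u = ⁅x, u⁆ := rfl
        rw [← this, huxy, sub_self]
      · rw [map_sub, hπfix y hym, hπk0 u hu, sub_zero]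
    · rintro ⟨z, hz, rfl⟩
      exact keyA z hz
  · rintro w ⟨z, hz, rfl⟩
    obtain ⟨h1, h2, _⟩ := keyA z hz
    exact ⟨h1, h2⟩
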